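/- arXiv:1211.3475 — 5 statements merged into one kernel-verified Lean document; each statement's English description precedes it below -/
import Mathlib

section
/- Let g : ℝ → ℝ be continuous with lim_{t→0} g(t)/t = 0 and lim_{|t|→∞} g(t)/t³ = +∞. For m > 0 set f(t) = g(t) + m·t. Then there exists Λ > 0 such that f(t)·t ≥ -Λ·t⁴ for all t ∈ ℝ. -/
open MeasureTheory Filter Topology

/-- there is `Λ > 0` with `f(t) t ≥ -Λ t⁴`, where `f(t) = g(t) + m t`. -/
theorem stmt_1 (g : ℝ → ℝ) (hg : Continuous g)
    (hg0 : Tendsto (fun t => g t / t) (𝓝[≠] (0 : ℝ)) (𝓝 0))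
    (hginf : Tendsto (fun t => g t / t ^ 3) (cocompact ℝ) atTop)
    (m : ℝ) (hm : 0 < m)
    (f : ℝ → ℝ) (hf : ∀ t, f t = g t + m * t) :
    ∃ Λ > (0 : ℝ), ∀ t : ℝ, f t * t ≥ -Λ * t ^ 4 := by
  -- near 0
  have h1 : ∀ᶠ t in 𝓝[≠] (0 : ℝ), dist (g t / t) 0 < m :=
    Metric.tendsto_nhds.mp hg0 m hm
  obtain ⟨δ, hδ, hδ'⟩ := Metric.mem_nhdsWithin_iff.mp h1
  -- near infinity
  rw [cocompact_eq_atBot_atTop, tendsto_sup] at hginf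
  obtain ⟨a, ha⟩ := eventually_atBot.mp (hginf.1.eventually (eventually_ge_atTop (0:ℝ)))
  obtain ⟨b, hb⟩ := eventually_atTop.mp (hginf.2.eventually (eventually_ge_atTop (0:ℝ)))
  set R : ℝ := max (max b (-a)) 1 with hRdef
  have hR1 : (1:ℝ) ≤ R := le_max_right _ _
  -- compact bound
  obtain ⟨C, hC⟩ := (isCompact_Icc (a := -R) (b := R)).exists_bound_of_continuousOn
    (((hg.add (continuous_const.mul continuous_id)).mul continuous_id).continuousOn
      (f := fun t : ℝ => (g t + m * t) * t))
  have hC0 : 0 ≤ C := le_trans (norm_nonneg _) (hC 0 (by constructor <;> nlinarith))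
  have hδ4 : (0:ℝ) < δ ^ 4 := by positivity
  refine ⟨C / δ ^ 4 + 1, by positivity, fun t => ?_⟩
  rw [hf]
  rcases eq_or_ne t 0 with rfl | ht0
  · simp
  have ht2 : (0:ℝ) < t ^ 2 := by positivity
  have ht4 : (0:ℝ) < t ^ 4 := by positivity
  rcases lt_or_ge (|t|) δ with hlt | hge
  · -- small t : f t * t ≥ 0
    have h2 : dist (g t / t) 0 < m :=
      hδ' ⟨by simpa [Metric.mem_ball, Real.dist_eq] using hlt, ht0⟩
    rw [Real.dist_eq, sub_zero, abs_lt] at h2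
    have hkey : (g t / t) * t ^ 2 = g t * t := by
      field_simp
    have h4 := mul_lt_mul_of_pos_right h2.1 ht2
    have hneg : (0:ℝ) ≤ (C / δ ^ 4 + 1) * t ^ 4 := by positivity
    nlinarith [h4, hkey, hneg]
  rcases le_or_gt R (|t|) with hbig | hmid
  · -- large t
    have hpos : 0 ≤ g t / t ^ 3 := by
      rcases abs_le.mp (le_refl (|t|)) with ⟨h⟩
      rcases le_abs.mp hbig with h' | h'
      · exact hb t (le_trans ((le_max_left b (-a)).trans (le_max_left _ _)) h')
      · exact ha t (by
          have : -R ≤ a := by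
            have : -a ≤ R := (le_max_right b (-a)).trans (le_max_left _ _)
            linarith
          linarith [neg_abs_le t, this, h'])
    have hkey : (g t / t ^ 3) * t ^ 4 = g t * t := by
      field_simp
    have h5 : 0 ≤ g t * t := hkey ▸ mul_nonneg hpos ht4.le
    have h6 : (0:ℝ) ≤ m * t ^ 2 := by positivity
    have hneg : (0:ℝ) ≤ (C / δ ^ 4 + 1) * t ^ 4 := by positivity
    nlinarith [h5, h6, hneg]
  · -- middle region
    have htIcc : t ∈ Set.Icc (-R) R := abs_le.mp hmid.le
    have hbd := hC t htIcc
    rw [Real.norm_eq_abs] at hbd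
    have h3 : -(C) ≤ (g t + m * t) * t := by
      have := abs_le.mp hbd
      linarith [this.1]
    have hδt : δ ^ 4 ≤ t ^ 4 := by
      calc δ ^ 4 ≤ |t| ^ 4 := pow_le_pow_left₀ hδ.le hge 4
        _ = t ^ 4 := by rw [← abs_pow]; exact abs_of_nonneg ht4.le
    have hcancel : C / δ ^ 4 * δ ^ 4 = C := div_mul_cancel₀ C hδ4.ne'
    have hCd : 0 ≤ C / δ ^ 4 := by positivity
    nlinarith [mul_le_mul_of_nonneg_left hδt hCd]
end

section
/- Suppose F : ℝ → ℝ is continuous, there exists Λ̃ > 0 with F(t) ≥ -Λ̃·t⁴ for all t, and F(t)/t⁴ → +∞ as |t| → ∞. Let Y be a finite-dimensional subspace of H¹(ℝ³) and (uₙ) ⊂ Y with ‖uₙ‖ → ∞. Then ∫_{ℝ³} F(uₙ) dx / ‖uₙ‖⁴ → +∞. -/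
open MeasureTheory Filter Topology

instance : Fact ((1 : ENNReal) ≤ 4) := ⟨by norm_num⟩

variable {X : Type*} [MeasurableSpace X] {μ : Measure X}

lemma aesm_min {f : X → ℝ} (hf : AEStronglyMeasurable f μ) (ε : ℝ) :
    AEStronglyMeasurable (fun x => min |f x| ε) μ :=
  (continuous_abs.min continuous_const).comp_aestronglyMeasurable hf

lemma aesm_pow4 {f : X → ℝ} (hf : AEStronglyMeasurable f μ) :
    AEStronglyMeasurable (fun x => f x ^ 4) μ :=
  (continuous_pow 4).comp_aestronglyMeasurable hf

lemma integrable_abs_pow4 {f : X → ℝ} (hf : MemLp f 4 μ) :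
    Integrable (fun x => |f x| ^ 4) μ := by
  have := hf.integrable_norm_rpow (by norm_num) (by norm_num)
  have h : ∀ x : X, ‖f x‖ ^ ((4:ENNReal).toReal) = |f x| ^ (4:ℕ) := by
    intro x
    rw [Real.norm_eq_abs, ENNReal.toReal_ofNat, ← Real.rpow_natCast |f x| 4]
    norm_num
  exact this.congr (Eventually.of_forall fun x => (h x))

lemma memLp_min {f : X → ℝ} (hf : MemLp f 4 μ) {ε : ℝ} (hε : 0 ≤ ε) :
    MemLp (fun x => min |f x| ε) 4 μ := by
  refine MemLp.of_le hf (aesm_min hf.aestronglyMeasurable ε) ?_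
  filter_upwards with x
  have h0 : 0 ≤ min |f x| ε := le_min (abs_nonneg _) hε
  simp only [Real.norm_eq_abs, abs_of_nonneg h0]
  exact min_le_left _ _

lemma integrable_min_pow4 {f : X → ℝ} (hf : MemLp f 4 μ) {ε : ℝ} (hε : 0 ≤ ε) :
    Integrable (fun x => min |f x| ε ^ 4) μ := by
  have h := integrable_abs_pow4 (memLp_min hf hε)
  refine h.congr (Eventually.of_forall fun x => ?_)
  simp only [abs_of_nonneg (le_min (abs_nonneg _) hε)]

lemma bridge {f : X → ℝ} (hf : MemLp f 4 μ) :
    (eLpNorm f 4 μ).toReal ^ 4 = ∫ x, |f x| ^ 4 ∂μ := by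
  have hnorm : eLpNorm f 4 μ = (∫⁻ x, (‖f x‖₊ : ENNReal) ^ (4:ℝ) ∂μ) ^ (1/(4:ℝ)) := by
    rw [eLpNorm_eq_lintegral_rpow_enorm_toReal (by norm_num) (by norm_num)]
    simp only [enorm_eq_nnnorm]
    norm_num
  have hint : Integrable (fun x => |f x| ^ 4) μ := by
    have := hf.integrable_norm_rpow (by norm_num) (by norm_num)
    have h : ∀ x : X, ‖f x‖ ^ ((4:ENNReal).toReal) = |f x| ^ (4:ℕ) := by
      intro x
      rw [Real.norm_eq_abs, ENNReal.toReal_ofNat, ← Real.rpow_natCast |f x| 4]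
      norm_num
    exact this.congr (Eventually.of_forall fun x => (h x))
  have hlin : ∫⁻ x, (‖f x‖₊ : ENNReal) ^ (4:ℝ) ∂μ = ENNReal.ofReal (∫ x, |f x| ^ 4 ∂μ) := by
    rw [MeasureTheory.ofReal_integral_eq_lintegral_ofReal hint
      (Eventually.of_forall fun x => by positivity)]
    refine lintegral_congr fun x => ?_
    rw [← enorm_eq_nnnorm, ← ofReal_norm, Real.norm_eq_abs,
      ENNReal.ofReal_rpow_of_nonneg (abs_nonneg _) (by norm_num : (0:ℝ) ≤ 4)]
    congr 1
    rw [← Real.rpow_natCast |f x| 4]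
    norm_num
  have hne : ENNReal.ofReal (∫ x, |f x| ^ 4 ∂μ) ≠ ⊤ := ENNReal.ofReal_ne_top
  rw [hnorm, hlin]
  rw [← ENNReal.toReal_rpow]
  rw [← Real.rpow_natCast _ 4]
  rw [← Real.rpow_mul ENNReal.toReal_nonneg]
  norm_num
  exact integral_nonneg fun x => by positivity

lemma min_lip (a b c : ℝ) : |min a c - min b c| ≤ |a - b| := by
  rcases le_total a c with h1 | h1 <;> rcases le_total b c with h2 | h2 <;>
    simp only [min_eq_left, min_eq_right, h1, h2] <;>
    rw [abs_sub_le_iff] <;> constructor <;>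
    nlinarith [le_abs_self (a - b), neg_abs_le (a - b)]

noncomputable def psi (μ : Measure X) (ε : ℝ) (v : Lp ℝ 4 μ) : ℝ :=
  ∫ x, min |v x| ε ^ 4 ∂μ

noncomputable def Psi (μ : Measure X) (ε : ℝ) (v : Lp ℝ 4 μ) : ℝ :=
  (eLpNorm (fun x => min |v x| ε) 4 μ).toReal

lemma psi_eq (hε : 0 ≤ ε) (v : Lp ℝ 4 μ) : psi μ ε v = Psi μ ε v ^ 4 := by
  rw [Psi, bridge (memLp_min (Lp.memLp v) hε), psi]
  refine integral_congr_ae (Eventually.of_forall fun x => ?_)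
  simp only [abs_of_nonneg (le_min (abs_nonneg _) hε)]

lemma Psi_le (hε : 0 ≤ ε) (v w : Lp ℝ 4 μ) : Psi μ ε v ≤ Psi μ ε w + ‖v - w‖ := by
  have hmv := aesm_min (Lp.aestronglyMeasurable v) ε
  have hmw := aesm_min (Lp.aestronglyMeasurable w) ε
  have h1 : eLpNorm (fun x => min |v x| ε) 4 μ ≤
      eLpNorm (fun x => min |v x| ε - min |w x| ε) 4 μ +
        eLpNorm (fun x => min |w x| ε) 4 μ := by
    have h := eLpNorm_add_le (hmv.sub hmw) hmw (by norm_num : (1:ENNReal) ≤ 4)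
    have e : (fun x => min |v x| ε - min |w x| ε) =
        (fun x => min |v x| ε) - (fun x => min |w x| ε) := rfl
    rw [e]
    simpa using h
  have h2 : eLpNorm (fun x => min |v x| ε - min |w x| ε) 4 μ ≤
      eLpNorm (⇑(v - w)) 4 μ := by
    apply eLpNorm_mono_ae
    filter_upwards [Lp.coeFn_sub v w] with x hx
    rw [hx]
    simp only [Real.norm_eq_abs, Pi.sub_apply]
    exact (min_lip _ _ _).trans (abs_abs_sub_abs_le_abs_sub _ _)
  have h3 : eLpNorm (⇑(v - w)) 4 μ = ENNReal.ofReal ‖v - w‖ := by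
    rw [Lp.norm_def, ENNReal.ofReal_toReal (Lp.eLpNorm_ne_top _)]
  have h4 : eLpNorm (fun x => min |v x| ε) 4 μ ≤
      ENNReal.ofReal ‖v - w‖ + eLpNorm (fun x => min |w x| ε) 4 μ :=
    h1.trans (add_le_add (h2.trans h3.le) le_rfl)
  have hfin : ENNReal.ofReal ‖v - w‖ + eLpNorm (fun x => min |w x| ε) 4 μ ≠ ⊤ :=
    ENNReal.add_ne_top.mpr ⟨ENNReal.ofReal_ne_top, (memLp_min (Lp.memLp w) hε).eLpNorm_ne_top⟩
  have h5 := ENNReal.toReal_mono hfin h4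
  rw [ENNReal.toReal_add ENNReal.ofReal_ne_top
    (memLp_min (Lp.memLp w) hε).eLpNorm_ne_top] at h5
  rw [ENNReal.toReal_ofReal (norm_nonneg _)] at h5
  rw [Psi, Psi]
  linarith

lemma Psi_continuous (hε : 0 ≤ ε) : Continuous (Psi μ ε) := by
  refine (LipschitzWith.of_dist_le_mul (K := 1) fun v w => ?_).continuous
  rw [Real.dist_eq, dist_eq_norm, NNReal.coe_one, one_mul, abs_sub_le_iff]
  constructor
  · linarith [Psi_le hε v w]
  · rw [← norm_neg, neg_sub]; linarith [Psi_le hε w v]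

lemma psi_continuous (hε : 0 ≤ ε) : Continuous (psi μ ε) := by
  have : psi μ ε = fun v => Psi μ ε v ^ 4 := funext fun v => psi_eq hε v
  rw [this]
  exact (Psi_continuous hε).pow 4

lemma psi_mono {ε ε' : ℝ} (hε : 0 ≤ ε) (hεε' : ε ≤ ε') (v : Lp ℝ 4 μ) :
    psi μ ε v ≤ psi μ ε' v := by
  refine integral_mono (integrable_min_pow4 (Lp.memLp v) hε)
    (integrable_min_pow4 (Lp.memLp v) (hε.trans hεε')) fun x => ?_
  exact pow_le_pow_left₀ (le_min (abs_nonneg _) hε) (min_le_min le_rfl hεε') 4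

lemma psi_tendsto (v : Lp ℝ 4 μ) :
    Tendsto (fun k : ℕ => psi μ (1 / (k + 1)) v) atTop (𝓝 0) := by
  have h := tendsto_integral_of_dominated_convergence (μ := μ)
    (F := fun k : ℕ => fun x => min |v x| (1 / (k + 1)) ^ 4)
    (f := fun _ => (0 : ℝ)) (bound := fun x => |v x| ^ 4)
    (fun k => aesm_pow4 (aesm_min (Lp.aestronglyMeasurable v) _))
    (integrable_abs_pow4 (Lp.memLp v))
    (fun k => Eventually.of_forall fun x => by
      have h0 : (0:ℝ) ≤ min |v x| (1 / (k + 1)) := le_min (abs_nonneg _) (by positivity)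
      rw [Real.norm_eq_abs, abs_of_nonneg (by positivity)]
      exact pow_le_pow_left₀ h0 (min_le_left _ _) 4)
    (Eventually.of_forall fun x => by
      have hlim : Tendsto (fun k : ℕ => (1 : ℝ) / (k + 1)) atTop (𝓝 0) :=
        tendsto_one_div_add_atTop_nhds_zero_nat
      have : Tendsto (fun k : ℕ => min |v x| (1 / (k + 1))) atTop (𝓝 0) := by
        refine squeeze_zero (fun k => le_min (abs_nonneg _) (by positivity))
          (fun k => min_le_right _ _) hlim
      simpa using this.pow 4)
  simpa [psi] using h

lemma key (Y : Submodule ℝ (Lp ℝ 4 μ)) [FiniteDimensional ℝ Y] :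
    ∃ ε : ℝ, 0 < ε ∧ ∀ v : Lp ℝ 4 μ, v ∈ Y → ‖v‖ = 1 → psi μ ε v ≤ 1 / 2 := by
  classical
  have hex : ∀ y : Y, ∃ e : ℝ, 0 < e ∧ (‖(y : Lp ℝ 4 μ)‖ = 1 → psi μ e ↑y < 1 / 2) := by
    intro y
    by_cases hy : ‖(y : Lp ℝ 4 μ)‖ = 1
    · have h2 : ∀ᶠ k : ℕ in atTop, psi μ (1 / (k + 1)) (y : Lp ℝ 4 μ) < 1 / 2 :=
        (psi_tendsto (μ := μ) (y : Lp ℝ 4 μ)).eventually_lt_const (by norm_num)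
      obtain ⟨k, hk⟩ := h2.exists
      exact ⟨1 / (k + 1), by positivity, fun _ => hk⟩
    · exact ⟨1, one_pos, fun hc => absurd hc hy⟩
  choose εf hpos hsmall using hex
  set S : Set Y := Metric.sphere 0 1 with hSdef
  have hS : IsCompact S := isCompact_sphere 0 1
  set U : Y → Set Y := fun y => {z : Y | psi μ (εf y) ↑z < 1 / 2} with hUdef
  have hUopen : ∀ y, IsOpen (U y) := by
    intro y
    exact isOpen_lt ((psi_continuous (hpos y).le).comp continuous_subtype_val) continuous_const
  have hmem : ∀ y ∈ S, U y ∈ 𝓝 y := by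
    intro y hy
    have hy1 : ‖(y : Lp ℝ 4 μ)‖ = 1 := by
      rw [hSdef] at hy
      simpa [mem_sphere_zero_iff_norm] using hy
    exact (hUopen y).mem_nhds (hsmall y hy1)
  obtain ⟨t, htS, hcover⟩ := hS.elim_nhds_subcover U hmem
  by_cases hne : t.Nonempty
  · refine ⟨t.inf' hne εf, ?_, ?_⟩
    · rw [Finset.lt_inf'_iff]
      exact fun y _ => hpos y
    · intro v hvY hv1
      have hyS : (⟨v, hvY⟩ : Y) ∈ S := by
        rw [hSdef, mem_sphere_zero_iff_norm]
        simpa using hv1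
      obtain ⟨z, hz⟩ := Set.mem_iUnion.mp (hcover hyS)
      obtain ⟨hzt, hzU⟩ := Set.mem_iUnion.mp hz
      have h1 : psi μ (εf z) v < 1 / 2 := hzU
      have h0 : (0:ℝ) < t.inf' hne εf := by
        rw [Finset.lt_inf'_iff]; exact fun y _ => hpos y
      exact (psi_mono h0.le (Finset.inf'_le εf hzt) v).trans h1.le
  · refine ⟨1, one_pos, fun v hvY hv1 => ?_⟩
    exfalso
    have hyS : (⟨v, hvY⟩ : Y) ∈ S := by
      rw [hSdef, mem_sphere_zero_iff_norm]
      simpa using hv1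
    have := hcover hyS
    rw [Finset.not_nonempty_iff_eq_empty.mp hne] at this
    simpa using this

lemma scale (u : Lp ℝ 4 μ) (hc : 0 < ‖u‖) (R : ℝ) :
    ∫ x, min |u x| R ^ 4 ∂μ = ‖u‖ ^ 4 * psi μ (R / ‖u‖) (‖u‖⁻¹ • u) := by
  set c := ‖u‖ with hcdef
  rw [psi]
  have hae : ∀ᵐ x ∂μ, min |((c⁻¹ • u : Lp ℝ 4 μ)) x| (R / c) ^ 4
      = c⁻¹ ^ 4 * min |u x| R ^ 4 := by
    filter_upwards [Lp.coeFn_smul c⁻¹ u] with x hx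
    rw [hx]
    simp only [Pi.smul_apply, smul_eq_mul]
    rw [abs_mul, abs_of_nonneg (inv_nonneg.mpr hc.le), div_eq_inv_mul,
      ← mul_min_of_nonneg _ _ (inv_nonneg.mpr hc.le), mul_pow]
  rw [integral_congr_ae hae, integral_const_mul, ← mul_assoc]
  have : c ^ 4 * c⁻¹ ^ 4 = 1 := by
    field_simp
  rw [this, one_mul]

set_option maxHeartbeats 2000000 in
/-- if `F ≥ -Λ t⁴` and `F(t)/t⁴ → +∞` as `|t| → ∞`, `Y` is a
finite-dimensional subspace of `H¹(ℝ³)` (modelled, via the Sobolev embedding and the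
equivalence of norms on finite-dimensional spaces, as a finite-dimensional subspace of
`L⁴(ℝ³)`), and `‖uₙ‖ → ∞` with `uₙ ∈ Y`, then `∫ F(uₙ) / ‖uₙ‖⁴ → +∞`. -/
theorem stmt_4 (F : ℝ → ℝ) (hF : Continuous F)
    (Λ : ℝ) (hΛ : 0 < Λ) (hlow : ∀ t : ℝ, F t ≥ -Λ * t ^ 4)
    (hsup : Tendsto (fun t => F t / t ^ 4) (cocompact ℝ) atTop)
    (Y : Submodule ℝ (Lp ℝ 4 (volume : Measure (EuclideanSpace ℝ (Fin 3)))))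
    [FiniteDimensional ℝ Y]
    (u : ℕ → Y)
    (hu : Tendsto (fun n => ‖u n‖) atTop atTop)
    (hint : ∀ n, Integrable
      (fun x => F ((u n : Lp ℝ 4 (volume : Measure (EuclideanSpace ℝ (Fin 3)))) x)) volume) :
    Tendsto (fun n =>
      (∫ x, F ((u n : Lp ℝ 4 (volume : Measure (EuclideanSpace ℝ (Fin 3)))) x)) / ‖u n‖ ^ 4)
      atTop atTop := by
  rw [tendsto_atTop]
  intro M
  set M0 : ℝ := max M 0 with hM0
  set M' : ℝ := 2 * M0 + Λ with hM'
  have hM0nn : 0 ≤ M0 := le_max_right M 0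
  have hC : 0 ≤ M' + Λ := by rw [hM']; linarith
  obtain ⟨K, hK, hKsub⟩ := Filter.mem_cocompact.mp (hsup.eventually (eventually_ge_atTop M'))
  obtain ⟨R₀, hR₀⟩ := hK.isBounded.subset_closedBall 0
  set R : ℝ := max R₀ 0 + 1 with hRdef
  have hR1 : (1:ℝ) ≤ R := by
    have := le_max_right R₀ 0
    linarith
  have hbig : ∀ t : ℝ, R ≤ |t| → M' * t ^ 4 ≤ F t := by
    intro t ht
    have htK : t ∉ K := by
      intro htK
      have h1 := hR₀ htK
      rw [Metric.mem_closedBall, Real.dist_eq, sub_zero] at h1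
      have h2 : |t| ≤ max R₀ 0 := h1.trans (le_max_left _ _)
      linarith
    have h := hKsub htK
    have ht0 : t ≠ 0 := by
      intro h0
      rw [h0, abs_zero] at ht
      linarith
    have ht4 : (0:ℝ) < t ^ 4 := by positivity
    calc M' * t ^ 4 ≤ (F t / t ^ 4) * t ^ 4 := mul_le_mul_of_nonneg_right h ht4.le
    _ = F t := div_mul_cancel₀ _ ht4.ne'
  obtain ⟨ε, hε, hkey⟩ := key Y
  have hpt : ∀ t : ℝ, (M' + Λ) * (t ^ 4 - min |t| R ^ 4) - Λ * t ^ 4 ≤ F t := by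
    intro t
    rcases le_total R |t| with h | h
    · rw [min_eq_right h]
      have h2 := hbig t h
      have hR4 : (0:ℝ) ≤ R ^ 4 := by positivity
      nlinarith
    · rw [min_eq_left h]
      have habs : |t| ^ 4 = t ^ 4 := by
        rw [pow_abs, abs_of_nonneg (by positivity)]
      have h3 := hlow t
      nlinarith
  have hev : ∀ᶠ n in atTop, max (R / ε) 1 ≤ ‖u n‖ := hu.eventually (eventually_ge_atTop _)
  filter_upwards [hev] with n hn
  set f : EuclideanSpace ℝ (Fin 3) → ℝ :=
    ((u n : Lp ℝ 4 (volume : Measure (EuclideanSpace ℝ (Fin 3)))) : _ → ℝ) with hf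
  have hcoe : ‖u n‖ = ‖(u n : Lp ℝ 4 (volume : Measure (EuclideanSpace ℝ (Fin 3))))‖ := rfl
  set c := ‖(u n : Lp ℝ 4 (volume : Measure (EuclideanSpace ℝ (Fin 3))))‖ with hcdef
  have hc1 : (1:ℝ) ≤ c := by
    rw [← hcoe]
    exact (le_max_right _ _).trans hn
  have hc0 : (0:ℝ) < c := by linarith
  have hmem := Lp.memLp (u n : Lp ℝ 4 (volume : Measure (EuclideanSpace ℝ (Fin 3))))
  have hint4 : Integrable (fun x => f x ^ 4) volume := by
    refine (integrable_abs_pow4 hmem).congr (Eventually.of_forall fun x => ?_)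
    show |f x| ^ 4 = f x ^ 4
    rw [pow_abs, abs_of_nonneg (by positivity : (0:ℝ) ≤ f x ^ 4)]
  have hintmin : Integrable (fun x => min |f x| R ^ 4) volume :=
    integrable_min_pow4 hmem (by linarith : (0:ℝ) ≤ R)
  have hI4 : ∫ x, f x ^ 4 = c ^ 4 := by
    have hb := bridge hmem
    have hc4 : c ^ 4 = ∫ x, |f x| ^ 4 := by
      rw [hcdef, Lp.norm_def]
      exact hb
    rw [hc4]
    refine integral_congr_ae (Eventually.of_forall fun x => ?_)
    show f x ^ 4 = |f x| ^ 4
    rw [pow_abs, abs_of_nonneg (by positivity : (0:ℝ) ≤ f x ^ 4)]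
  set v : Lp ℝ 4 (volume : Measure (EuclideanSpace ℝ (Fin 3))) := c⁻¹ • (u n : _) with hv
  have hvY : v ∈ Y := Y.smul_mem _ (u n).2
  have hv1 : ‖v‖ = 1 := by
    rw [hv, norm_smul, Real.norm_eq_abs, abs_of_nonneg (inv_nonneg.mpr hc0.le), ← hcdef]
    field_simp
  have hscale := scale (μ := (volume : Measure (EuclideanSpace ℝ (Fin 3))))
    ((u n : Lp ℝ 4 (volume : Measure (EuclideanSpace ℝ (Fin 3))))) hc0 R
  rw [← hcdef, ← hv, ← hf] at hscale
  have hpsi : psi volume (R / c) v ≤ 1 / 2 := by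
    have h1 : R / c ≤ ε := by
      rw [div_le_iff₀ hc0]
      have h2 : R / ε ≤ c :=
        calc R / ε ≤ max (R / ε) 1 := le_max_left _ _
        _ ≤ ‖u n‖ := hn
        _ = c := hcoe
      rw [div_le_iff₀ hε] at h2
      linarith
    have h2 : 0 ≤ R / c := by positivity
    exact (psi_mono h2 h1 v).trans (hkey v hvY hv1)
  have hminbound : ∫ x, min |f x| R ^ 4 ≤ c ^ 4 / 2 := by
    rw [hscale]
    nlinarith [pow_pos hc0 4]
  have hint1 : Integrable (fun x => (M' + Λ) * (f x ^ 4 - min |f x| R ^ 4)) volume := by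
    exact (hint4.sub hintmin).const_mul _
  have hint2 : Integrable (fun x => Λ * f x ^ 4) volume := hint4.const_mul _
  have hcombo : Integrable
      (fun x => (M' + Λ) * (f x ^ 4 - min |f x| R ^ 4) - Λ * f x ^ 4) volume := by
    exact hint1.sub hint2
  have hIle : ∫ x, ((M' + Λ) * (f x ^ 4 - min |f x| R ^ 4) - Λ * f x ^ 4)
      ≤ ∫ x, F (f x) :=
    integral_mono hcombo (hint n) fun x => hpt (f x)
  have hcalc : ∫ x, ((M' + Λ) * (f x ^ 4 - min |f x| R ^ 4) - Λ * f x ^ 4)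
      = (M' + Λ) * (c ^ 4 - ∫ x, min |f x| R ^ 4) - Λ * c ^ 4 := by
    rw [integral_sub hint1 hint2, integral_const_mul, integral_const_mul,
      integral_sub hint4 hintmin, hI4]
  rw [hcalc] at hIle
  have hfinal : M0 * c ^ 4 ≤ ∫ x, F (f x) := by
    have h4pos : (0:ℝ) < c ^ 4 := pow_pos hc0 4
    nlinarith
  have hc4 : (0:ℝ) < ‖u n‖ ^ 4 := by
    rw [hcoe]
    positivity
  rw [le_div_iff₀ hc4]
  have hMM0 : M ≤ M0 := le_max_left M 0
  have h4pos : (0:ℝ) < c ^ 4 := pow_pos hc0 4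
  rw [hcoe]
  nlinarith
end

section
/- Let g : ℝ → ℝ be continuous with G(t) = ∫₀ᵗ g, and suppose t ↦ g(t)/|t|³ is nondecreasing on (0, ∞) and on (−∞, 0). Then for 𝒢(t) := g(t)t − 4G(t), one has 𝒢(st) ≤ 𝒢(t) for all s ∈ [0,1] and t ∈ ℝ (i.e., Jeanjean's condition (Je) holds with θ = 1). -/
open MeasureTheory Filter Topology Set

lemma ae_icc_ne (a b p : ℝ) :
    ∀ᵐ x ∂(volume.restrict (Icc a b)), x ∈ Icc a b ∧ x ≠ p := by
  have h1 : ∀ᵐ x ∂(volume.restrict (Icc a b)), x ∈ Icc a b :=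
    ae_restrict_mem measurableSet_Icc
  have h2 : ∀ᵐ x : ℝ, x ≠ p := by
    have hset : {x : ℝ | ¬ x ≠ p} = {p} := by ext x; simp
    rw [ae_iff, hset]
    exact measure_singleton p
  filter_upwards [h1, ae_restrict_of_ae h2] with x hx hne
  exact ⟨hx, hne⟩

/-- if `t ↦ g(t)/|t|³` is nondecreasing on `(0,∞)` and on `(-∞,0)`,
then `𝒢(st) ≤ 𝒢(t)` for all `s ∈ [0,1]`, `t ∈ ℝ`, where `𝒢(t) = g(t) t - 4 G(t)`. -/
theorem stmt_13 (g G : ℝ → ℝ) (hg : Continuous g)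
    (hG : ∀ t, G t = ∫ τ in (0 : ℝ)..t, g τ)
    (hmono₁ : MonotoneOn (fun t => g t / |t| ^ 3) (Ioi (0 : ℝ)))
    (hmono₂ : MonotoneOn (fun t => g t / |t| ^ 3) (Iio (0 : ℝ))) :
    ∀ s ∈ Icc (0 : ℝ) 1, ∀ t : ℝ,
      g (s * t) * (s * t) - 4 * G (s * t) ≤ g t * t - 4 * G t := by
  intro s hs t
  obtain ⟨hs0, hs1⟩ := hs
  have hgint : ∀ a b : ℝ, IntervalIntegrable g volume a b :=
    fun a b => hg.intervalIntegrable a b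
  rcases lt_trichotomy t 0 with ht | ht | ht
  · -- t < 0
    set c := g t / |t| ^ 3 with hc
    have habs : |t| = -t := abs_of_neg ht
    have ht3 : (0:ℝ) < |t| ^ 3 := pow_pos (abs_pos.2 ht.ne) 3
    have hgt : g t = c * |t| ^ 3 := by rw [hc, div_mul_cancel₀ _ (ne_of_gt ht3)]
    have hst0 : s * t ≤ 0 := mul_nonpos_of_nonneg_of_nonpos hs0 ht.le
    have htst : t ≤ s * t := by nlinarith
    -- pointwise bound on Ico t 0
    have key : ∀ τ, t ≤ τ → τ < 0 → -(c * τ ^ 3) ≤ g τ := by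
      intro τ hτ1 hτ2
      have h1 : c ≤ g τ / |τ| ^ 3 := hmono₂ (mem_Iio.2 ht) (mem_Iio.2 hτ2) hτ1
      have hτ3 : (0:ℝ) < |τ| ^ 3 := pow_pos (abs_pos.2 hτ2.ne) 3
      have h2 : c * |τ| ^ 3 ≤ g τ / |τ| ^ 3 * |τ| ^ 3 :=
        mul_le_mul_of_nonneg_right h1 hτ3.le
      rw [div_mul_cancel₀ _ (ne_of_gt hτ3)] at h2
      have hab : |τ| = -τ := abs_of_neg hτ2
      rw [hab] at h2
      nlinarith [h2]
    have hint : ∫ τ in t..(s*t), -(c * τ ^ 3) ≤ ∫ τ in t..(s*t), g τ := by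
      apply intervalIntegral.integral_mono_ae_restrict htst
        (((continuous_const.mul (continuous_pow 3)).neg).intervalIntegrable _ _)
        (hgint _ _)
      filter_upwards [ae_icc_ne t (s*t) (s*t)] with x ⟨⟨hx1, hx2⟩, hne⟩
      have hlt : x < s*t := lt_of_le_of_ne hx2 hne
      exact key x hx1 (lt_of_lt_of_le hlt hst0)
    have hval : ∫ τ in t..(s*t), -(c * τ ^ 3)
        = -(c * ((s*t)^4 - t^4) / 4) := by
      rw [intervalIntegral.integral_neg, intervalIntegral.integral_const_mul,
        integral_pow]
      ring
    have hadd : G (s*t) = G t + ∫ τ in t..(s*t), g τ := by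
      rw [hG, hG, ← intervalIntegral.integral_add_adjacent_intervals (hgint 0 t) (hgint t (s*t))]
    have hB : g (s*t) * (s*t) ≤ -(c * (s*t)^4) := by
      rcases lt_or_eq_of_le hst0 with hst | hst
      · have h1 : c ≤ g (s*t) / |s*t| ^ 3 := hmono₂ (mem_Iio.2 ht) (mem_Iio.2 hst) htst
        have hτ3 : (0:ℝ) < |s*t| ^ 3 := pow_pos (abs_pos.2 hst.ne) 3
        have h2 : c * |s*t| ^ 3 ≤ g (s*t) / |s*t| ^ 3 * |s*t| ^ 3 :=
          mul_le_mul_of_nonneg_right h1 hτ3.le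
        rw [div_mul_cancel₀ _ (ne_of_gt hτ3)] at h2
        have hab : |s*t| = -(s*t) := abs_of_neg hst
        rw [hab] at h2
        nlinarith [mul_le_mul_of_nonpos_right h2 hst.le]
      · rw [hst]; simp
    rw [hval] at hint
    have hgt' : g t * t = -(c * t^4) := by rw [hgt]; rw [habs]; ring
    rw [hadd, hgt']
    linarith
  · subst ht; simp
  · -- t > 0
    set c := g t / |t| ^ 3 with hc
    have habs : |t| = t := abs_of_pos ht
    have ht3 : (0:ℝ) < |t| ^ 3 := pow_pos (abs_pos.2 ht.ne') 3
    have hgt : g t = c * |t| ^ 3 := by rw [hc, div_mul_cancel₀ _ (ne_of_gt ht3)]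
    have hst0 : 0 ≤ s * t := mul_nonneg hs0 ht.le
    have htst : s * t ≤ t := by nlinarith
    have key : ∀ τ, 0 < τ → τ ≤ t → g τ ≤ c * τ ^ 3 := by
      intro τ hτ1 hτ2
      have h1 : g τ / |τ| ^ 3 ≤ c := hmono₁ (mem_Ioi.2 hτ1) (mem_Ioi.2 ht) hτ2
      have hτ3 : (0:ℝ) < |τ| ^ 3 := pow_pos (abs_pos.2 hτ1.ne') 3
      have h2 : g τ / |τ| ^ 3 * |τ| ^ 3 ≤ c * |τ| ^ 3 :=
        mul_le_mul_of_nonneg_right h1 hτ3.le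
      rw [div_mul_cancel₀ _ (ne_of_gt hτ3)] at h2
      have hab : |τ| = τ := abs_of_pos hτ1
      rw [hab] at h2
      nlinarith [h2]
    have hint : ∫ τ in (s*t)..t, g τ ≤ ∫ τ in (s*t)..t, c * τ ^ 3 := by
      apply intervalIntegral.integral_mono_ae_restrict htst (hgint _ _)
        ((continuous_const.mul (continuous_pow 3)).intervalIntegrable _ _)
      filter_upwards [ae_icc_ne (s*t) t (s*t)] with x ⟨⟨hx1, hx2⟩, hne⟩
      have hlt : s*t < x := lt_of_le_of_ne hx1 (Ne.symm hne)
      exact key x (lt_of_le_of_lt hst0 hlt) hx2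
    have hval : ∫ τ in (s*t)..t, c * τ ^ 3 = c * (t^4 - (s*t)^4) / 4 := by
      rw [intervalIntegral.integral_const_mul, integral_pow]
      ring
    have hadd : G t = G (s*t) + ∫ τ in (s*t)..t, g τ := by
      rw [hG, hG, ← intervalIntegral.integral_add_adjacent_intervals (hgint 0 (s*t)) (hgint (s*t) t)]
    have hB : g (s*t) * (s*t) ≤ c * (s*t)^4 := by
      rcases lt_or_eq_of_le hst0 with hst | hst
      · have h1 : g (s*t) / |s*t| ^ 3 ≤ c := hmono₁ (mem_Ioi.2 hst) (mem_Ioi.2 ht) htst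
        have hτ3 : (0:ℝ) < |s*t| ^ 3 := pow_pos (abs_pos.2 hst.ne') 3
        have h2 : g (s*t) / |s*t| ^ 3 * |s*t| ^ 3 ≤ c * |s*t| ^ 3 :=
          mul_le_mul_of_nonneg_right h1 hτ3.le
        rw [div_mul_cancel₀ _ (ne_of_gt hτ3)] at h2
        have hab : |s*t| = s*t := abs_of_pos hst
        rw [hab] at h2
        nlinarith [mul_le_mul_of_nonneg_right h2 hst.le]
      · rw [← hst]; simp
    rw [hval] at hint
    have hgt' : g t * t = c * t^4 := by rw [hgt, habs]; ring
    rw [hadd, hgt']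
    linarith
end

section
/- Let G : ℝ → ℝ satisfy G(t) ≥ -Λ̃t⁴ for some Λ̃ > 0 and G(t)/t⁴ → +∞ as |t| → ∞, and let the functional Φ(u) = (1/2)‖u‖² + (1/4)P(u) − ∫_{ℝ³}G(u)dx with 0 ≤ P(u) ≤ 4a₁‖u‖⁴ be defined on a finite-dimensional subspace Y of H¹(ℝ³) (with equivalent norms and a.e.-convergent subsequences available). Then Φ(uₙ) → −∞ for any sequence uₙ ∈ Y with ‖uₙ‖ → ∞. -/
open MeasureTheory Filter Topology ENNReal

local notation "μ₀" => (volume : MeasureTheory.Measure (EuclideanSpace ℝ (Fin 3)))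

lemma integrable_pow_four' {α : Type*} [MeasurableSpace α] {μ : Measure α}
    (f : Lp ℝ 4 μ) : Integrable (fun x => (f x) ^ 4) μ := by
  have h := (Lp.memLp f).integrable_norm_rpow (by norm_num) (by norm_num)
  refine h.congr (Eventually.of_forall fun x => ?_)
  have : ((4 : ℝ≥0∞)).toReal = ((4 : ℕ) : ℝ) := by norm_num
  simp only [this, Real.rpow_natCast, Real.norm_eq_abs]
  rw [pow_abs, abs_of_nonneg (by positivity)]

lemma integral_pow_four' {α : Type*} [MeasurableSpace α] {μ : Measure α}
    (f : Lp ℝ 4 μ) : ∫ x, (f x) ^ 4 ∂μ = ‖f‖ ^ 4 := by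
  have hm : MemLp (⇑f) 4 μ := Lp.memLp f
  rw [Lp.norm_def, hm.eLpNorm_eq_integral_rpow_norm (by norm_num) (by norm_num)]
  have h4 : ((4 : ℝ≥0∞)).toReal = (4 : ℝ) := by norm_num
  have hnn : 0 ≤ ∫ a, ‖f a‖ ^ ((4:ℝ≥0∞)).toReal ∂μ :=
    integral_nonneg fun a => by rw [h4]; positivity
  rw [ENNReal.toReal_ofReal (by positivity)]
  have hI : ∫ a, ‖f a‖ ^ ((4:ℝ≥0∞)).toReal ∂μ = ∫ x, (f x) ^ 4 ∂μ := by
    refine integral_congr_ae (Eventually.of_forall fun x => ?_)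
    have : ((4:ℝ≥0∞)).toReal = ((4:ℕ):ℝ) := by norm_num
    simp only [this, Real.rpow_natCast, Real.norm_eq_abs]
    rw [pow_abs, abs_of_nonneg (by positivity)]
  rw [hI] at hnn ⊢
  rw [← Real.rpow_natCast (_ ^ _) 4, ← Real.rpow_mul hnn]
  norm_num

set_option maxHeartbeats 40000000 in
set_option synthInstance.maxHeartbeats 1000000 in
/-- anti-coercivity on finite-dimensional subspaces: with `G ≥ -Λ̃ t⁴`,
`G(t)/t⁴ → +∞` as `|t| → ∞`, `0 ≤ P(u) ≤ 4a₁‖u‖⁴`, the functional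
`Φ(u) = ½‖u‖² + ¼P(u) - ∫G(u)` on a finite-dimensional subspace `Y` of `H¹(ℝ³)`
(modelled as a finite-dimensional subspace of `L⁴(ℝ³)` with an equivalent norm)
satisfies `Φ(uₙ) → -∞` whenever `‖uₙ‖ → ∞`. -/
theorem stmt_14 (G : ℝ → ℝ) (hGc : Continuous G)
    (Λ : ℝ) (hΛ : 0 < Λ) (hlow : ∀ t : ℝ, G t ≥ -Λ * t ^ 4)
    (hsup : Tendsto (fun t => G t / t ^ 4) (cocompact ℝ) atTop)
    (a₁ : ℝ) (ha₁ : 0 < a₁)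
    (Y : Submodule ℝ (Lp ℝ 4 (volume : Measure (EuclideanSpace ℝ (Fin 3)))))
    [FiniteDimensional ℝ Y]
    (P : Y → ℝ) (hP0 : ∀ w, 0 ≤ P w) (hP : ∀ w, P w ≤ 4 * a₁ * ‖w‖ ^ 4)
    (u : ℕ → Y) (hu : Tendsto (fun n => ‖u n‖) atTop atTop)
    (hint : ∀ n, Integrable
      (fun x => G ((u n : Lp ℝ 4 (volume : Measure (EuclideanSpace ℝ (Fin 3)))) x)) volume)
    (Φ : Y → ℝ)
    (hΦ : ∀ w : Y, Φ w = 1 / 2 * ‖w‖ ^ 2 + 1 / 4 * P w -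
      ∫ x, G ((w : Lp ℝ 4 (volume : Measure (EuclideanSpace ℝ (Fin 3)))) x)) :
    Tendsto (fun n => Φ (u n)) atTop atBot := by
  classical
  apply tendsto_of_subseq_tendsto
  intro ns hns
  have hns' : Tendsto (fun n => ‖u (ns n)‖) atTop atTop := hu.comp hns
  obtain ⟨N₀, hN₀⟩ := eventually_atTop.mp (hns'.eventually (eventually_ge_atTop 1))
  set v : ℕ → Y := fun n => u (ns (n + N₀)) with hvdef
  have ht1 : ∀ n, 1 ≤ ‖v n‖ := fun n => hN₀ (n + N₀) (Nat.le_add_left _ _)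
  have ht0 : ∀ n, (0:ℝ) < ‖v n‖ := fun n => lt_of_lt_of_le (zero_lt_one : (0:ℝ) < 1) (ht1 n)
  have htt : Tendsto (fun n => ‖v n‖) atTop atTop :=
    hns'.comp (tendsto_add_atTop_nat N₀)
  set w : ℕ → Y := fun n => (‖v n‖)⁻¹ • v n with hwdef
  have hw1 : ∀ n, w n ∈ Metric.sphere (0:Y) 1 := by
    intro n
    rw [mem_sphere_zero_iff_norm]
    simp only [hwdef, norm_smul, norm_inv, norm_norm]
    exact inv_mul_cancel₀ (ht0 n).ne'
  obtain ⟨z, hzmem, φ, hφ, hφlim⟩ := (isCompact_sphere (0:Y) 1).tendsto_subseq hw1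
  have hznorm : ‖z‖ = 1 := mem_sphere_zero_iff_norm.mp hzmem
  have hcoe : Tendsto (fun n => ((w (φ n) : Lp ℝ 4 μ₀))) atTop (𝓝 (z : Lp ℝ 4 μ₀)) :=
    (continuous_subtype_val.tendsto z).comp hφlim
  have htm : TendstoInMeasure μ₀ (fun n => ⇑((w (φ n) : Lp ℝ 4 μ₀))) atTop
      ⇑((z : Lp ℝ 4 μ₀)) := tendstoInMeasure_of_tendsto_Lp hcoe
  obtain ⟨ψ, hψ, hae⟩ := htm.exists_seq_tendsto_ae
  refine ⟨fun i => φ (ψ i) + N₀, ?_⟩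
  set k : ℕ → ℕ := fun i => φ (ψ i) with hkdef
  set V : ℕ → Y := fun i => v (k i) with hVdef
  set T : ℕ → ℝ := fun i => ‖V i‖ with hTdef
  have hkt : Tendsto k atTop atTop := hφ.tendsto_atTop.comp hψ.tendsto_atTop
  have hTt : Tendsto T atTop atTop := htt.comp hkt
  have hT1 : ∀ i, 1 ≤ T i := fun i => ht1 (k i)
  have hT0 : ∀ i, (0:ℝ) < T i := fun i => ht0 (k i)
  have hT40 : ∀ i, (0:ℝ) < T i ^ 4 := fun i => pow_pos (hT0 i) 4
  -- coercion identity
  have hVW : ∀ i, ((V i : Lp ℝ 4 μ₀)) = T i • ((w (k i) : Lp ℝ 4 μ₀)) := by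
    intro i
    have h1 : V i = T i • w (k i) := by
      simp only [hwdef, smul_smul]
      rw [mul_inv_cancel₀ (hT0 i).ne', one_smul]
    rw [h1, Submodule.coe_smul]
  have haeV : ∀ᵐ x ∂μ₀, ∀ i, ((V i : Lp ℝ 4 μ₀)) x = T i * ((w (k i) : Lp ℝ 4 μ₀)) x := by
    refine ae_all_iff.mpr fun i => ?_
    rw [hVW i]
    filter_upwards [Lp.coeFn_smul (T i) ((w (k i) : Lp ℝ 4 μ₀))] with x hx
    simp [hx]
  -- a measurable representative of z
  set z' : EuclideanSpace ℝ (Fin 3) → ℝ := (Lp.aestronglyMeasurable (z : Lp ℝ 4 μ₀)).mk _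
    with hz'def
  have hz'sm : StronglyMeasurable z' := (Lp.aestronglyMeasurable _).stronglyMeasurable_mk
  have hz'ae : ⇑((z : Lp ℝ 4 μ₀)) =ᵐ[μ₀] z' := (Lp.aestronglyMeasurable _).ae_eq_mk
  set A : Set (EuclideanSpace ℝ (Fin 3)) := {x | z' x ≠ 0} with hAdef
  have hAmeas : MeasurableSet A := (hz'sm.measurable (measurableSet_singleton 0)).compl
  have hA0 : μ₀ A ≠ 0 := by
    intro h0
    have hz0' : ∀ᵐ x ∂μ₀, z' x = 0 := by
      rw [ae_iff]
      rw [hAdef] at h0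
      exact h0
    have hz0 : z' =ᵐ[μ₀] 0 := hz0'.mono fun x hx => by simp [hx]
    have : ⇑((z : Lp ℝ 4 μ₀)) =ᵐ[μ₀] 0 := hz'ae.trans hz0
    have hzn : ‖(z : Lp ℝ 4 μ₀)‖ = 0 := by
      rw [Lp.norm_def, eLpNorm_congr_ae this, eLpNorm_zero]
      simp
    rw [show ‖(z : Lp ℝ 4 μ₀)‖ = ‖z‖ from rfl, hznorm] at hzn
    norm_num at hzn
  -- the functions F
  set F : ℕ → EuclideanSpace ℝ (Fin 3) → ℝ :=
    fun i x => G (((V i : Lp ℝ 4 μ₀)) x) + Λ * (((V i : Lp ℝ 4 μ₀)) x) ^ 4 with hFdef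
  have hFnn : ∀ i x, 0 ≤ F i x := by
    intro i x
    have := hlow (((V i : Lp ℝ 4 μ₀)) x)
    simp only [hFdef]
    nlinarith
  have hGint : ∀ i, Integrable (fun x => G (((V i : Lp ℝ 4 μ₀)) x)) μ₀ := by
    intro i
    exact hint (ns (k i + N₀))
  have hFint : ∀ i, Integrable (F i) μ₀ := fun i =>
    (hGint i).add ((integrable_pow_four' _).const_mul Λ)
  have hFI : ∀ i, ∫ x, F i x ∂μ₀ =
      (∫ x, G (((V i : Lp ℝ 4 μ₀)) x) ∂μ₀) + Λ * T i ^ 4 := by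
    intro i
    rw [hFdef]
    rw [integral_add (hGint i) ((integrable_pow_four' _).const_mul Λ),
      integral_const_mul, integral_pow_four']
    rfl
  have hcontF : Continuous (fun t : ℝ => G t + Λ * t ^ 4) :=
    hGc.add (continuous_const.mul (continuous_pow 4))
  have hFm : ∀ i, AEStronglyMeasurable (F i) μ₀ := fun i =>
    hcontF.comp_aestronglyMeasurable (Lp.aestronglyMeasurable _)
  set q : ℕ → EuclideanSpace ℝ (Fin 3) → ℝ≥0∞ :=
    fun i x => ENNReal.ofReal (F i x / T i ^ 4) with hqdef
  have hqm : ∀ i, AEMeasurable (q i) μ₀ := fun i =>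
    ENNReal.measurable_ofReal.comp_aemeasurable (by
      simpa only [div_eq_mul_inv] using ((hFm i).mul_const ((T i ^ 4)⁻¹)).aemeasurable)
  -- pointwise blow-up
  have hptwise : ∀ᵐ x ∂μ₀, x ∈ A → Tendsto (fun i => q i x) atTop (𝓝 ⊤) := by
    filter_upwards [hae, haeV, hz'ae] with x hx hVx hzx hxA
    have hz0 : ((z : Lp ℝ 4 μ₀)) x ≠ 0 := by rw [hzx]; exact hxA
    set W : ℕ → ℝ := fun i => ((w (k i) : Lp ℝ 4 μ₀)) x with hWdef
    have hWlim : Tendsto W atTop (𝓝 (((z : Lp ℝ 4 μ₀)) x)) := by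
      have := hx.comp hψ.tendsto_atTop
      -- hx : Tendsto (fun n => (w (φ n)) x) atTop (𝓝 (z x)); compose with ψ? no:
      -- hae was about (fun i => w (φ (ψ i)) x) already? check
      exact hx
    have hW4 : Tendsto (fun i => W i ^ 4) atTop (𝓝 ((((z : Lp ℝ 4 μ₀)) x) ^ 4)) :=
      hWlim.pow 4
    have hz40 : 0 < (((z : Lp ℝ 4 μ₀)) x) ^ 4 :=
      lt_of_le_of_ne (by positivity) (Ne.symm (pow_ne_zero 4 hz0))
    have habs : Tendsto (fun i => |T i * W i|) atTop atTop := by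
      have h1 : Tendsto (fun i => T i * |W i|) atTop atTop :=
        hTt.atTop_mul_pos (abs_pos.mpr hz0) hWlim.abs
      refine h1.congr fun i => ?_
      rw [abs_mul, abs_of_pos (hT0 i)]
    have hcc : Tendsto (fun i => T i * W i) atTop (cocompact ℝ) := by
      rw [cocompact_eq_atBot_atTop, ← comap_abs_atTop, tendsto_comap_iff]
      exact habs
    have hGs : Tendsto (fun i => G (T i * W i) / (T i * W i) ^ 4 + Λ) atTop atTop :=
      tendsto_atTop_add_const_right _ Λ (hsup.comp hcc)
    have hWne : ∀ᶠ i in atTop, W i ≠ 0 := hWlim.eventually_ne hz0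
    have hmul : Tendsto (fun i => (G (T i * W i) / (T i * W i) ^ 4 + Λ) * W i ^ 4)
        atTop atTop := hGs.atTop_mul_pos hz40 hW4
    have hmain : Tendsto (fun i => F i x / T i ^ 4) atTop atTop := by
      refine hmul.congr' ?_
      filter_upwards [hWne] with i hWi
      have hTne : T i ≠ 0 := (hT0 i).ne'
      have hsne : T i * W i ≠ 0 := mul_ne_zero hTne hWi
      rw [hFdef]
      simp only
      rw [hVx i]
      field_simp
      ring
    have : Tendsto (fun i => ENNReal.ofReal (F i x / T i ^ 4)) atTop (𝓝 ⊤) :=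
      ENNReal.tendsto_ofReal_atTop.comp hmain
    exact this
  -- liminf of lintegrals is ⊤
  have hLtop : ∫⁻ x, Filter.liminf (fun i => q i x) atTop ∂μ₀ = ⊤ := by
    have haeL : ∀ᵐ x ∂μ₀, x ∈ A → Filter.liminf (fun i => q i x) atTop = ⊤ :=
      hptwise.mono fun x h hx => (h hx).liminf_eq
    have hres : ∫⁻ x in A, Filter.liminf (fun i => q i x) atTop ∂μ₀ = ⊤ := by
      have : ∫⁻ x in A, Filter.liminf (fun i => q i x) atTop ∂μ₀ =
          ∫⁻ _ in A, ⊤ ∂μ₀ := by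
        refine lintegral_congr_ae ?_
        exact (ae_restrict_iff' hAmeas).mpr haeL
      rw [this, setLIntegral_const]
      exact ENNReal.top_mul hA0
    have hle : ∫⁻ x in A, Filter.liminf (fun i => q i x) atTop ∂μ₀ ≤
        ∫⁻ x, Filter.liminf (fun i => q i x) atTop ∂μ₀ :=
      lintegral_mono' Measure.restrict_le_self le_rfl
    rw [hres] at hle
    exact top_le_iff.mp hle
  have hliminf : Filter.liminf (fun i => ∫⁻ x, q i x ∂μ₀) atTop = ⊤ := by
    refine top_le_iff.mp ?_
    calc (⊤ : ℝ≥0∞) = ∫⁻ x, Filter.liminf (fun i => q i x) atTop ∂μ₀ := hLtop.symm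
    _ ≤ Filter.liminf (fun i => ∫⁻ x, q i x ∂μ₀) atTop := lintegral_liminf_le' hqm
  have hqfin : ∀ i, ∫⁻ x, q i x ∂μ₀ ≠ ⊤ := by
    intro i
    exact (((hFint i).div_const (T i ^ 4)).lintegral_lt_top).ne
  -- the normalized integrals tend to atTop
  have hqt : Tendsto (fun i => (∫⁻ x, q i x ∂μ₀).toReal) atTop atTop := by
    rw [tendsto_atTop]
    intro M
    have hM : ENNReal.ofReal (max M 0) < Filter.liminf (fun i => ∫⁻ x, q i x ∂μ₀) atTop := by
      rw [hliminf]; exact ofReal_lt_top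
    filter_upwards [eventually_lt_of_lt_liminf hM] with i hi
    have := ENNReal.toReal_mono (hqfin i) hi.le
    rw [ENNReal.toReal_ofReal (le_max_right M 0)] at this
    exact (le_max_left M 0).trans this
  have hIeq : ∀ i, ∫ x, F i x / T i ^ 4 ∂μ₀ = (∫⁻ x, q i x ∂μ₀).toReal := by
    intro i
    rw [hqdef]
    exact integral_eq_lintegral_of_nonneg_ae
      (Eventually.of_forall fun x => div_nonneg (hFnn i x) (hT40 i).le)
      (by simpa only [div_eq_mul_inv] using (hFm i).mul_const ((T i ^ 4)⁻¹))
  have hFt : Tendsto (fun i => (∫ x, F i x ∂μ₀) / T i ^ 4) atTop atTop := by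
    refine hqt.congr fun i => ?_
    rw [← hIeq i, integral_div]
  set gG : ℕ → ℝ := fun i => (∫ x, G (((V i : Lp ℝ 4 μ₀)) x) ∂μ₀) / T i ^ 4 with hgGdef
  have hGt : Tendsto gG atTop atTop := by
    have h1 : Tendsto (fun i => (∫ x, F i x ∂μ₀) / T i ^ 4 + -Λ) atTop atTop :=
      tendsto_atTop_add_const_right _ (-Λ) hFt
    refine h1.congr fun i => ?_
    rw [hFI i, hgGdef]
    have hTne : (T i ^ 4 : ℝ) ≠ 0 := (hT40 i).ne'
    rw [add_div, mul_div_assoc, div_self hTne]; ring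
  -- conclusion
  set b : ℕ → ℝ := fun i => 1/2 + a₁ - gG i with hbdef
  have hbt : Tendsto b atTop atBot := by
    have h1 : Tendsto (fun i => -gG i) atTop atBot := tendsto_neg_atTop_atBot.comp hGt
    have h2 := tendsto_atBot_add_const_left atTop (1/2 + a₁) h1
    refine h2.congr fun i => ?_
    simp [hbdef, sub_eq_add_neg]
  have hΦle : ∀ᶠ i in atTop, Φ (V i) ≤ b i := by
    filter_upwards [hbt.eventually_le_atBot 0] with i hbneg
    have hPb := hP (V i)
    have hPb0 := hP0 (V i)
    have hform := hΦ (V i)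
    have hGi : ∫ x, G (((V i : Lp ℝ 4 μ₀)) x) ∂μ₀ = gG i * T i ^ 4 := by
      rw [hgGdef]
      exact (div_mul_cancel₀ _ (hT40 i).ne').symm
    have hT2 : T i ^ 2 ≤ T i ^ 4 := by
      have h := hT1 i
      nlinarith [sq_nonneg (T i), sq_nonneg (T i ^ 2 - 1), sq_nonneg (T i - 1)]
    have hTi := hT1 i
    have h1 : Φ (V i) ≤ T i ^ 4 * b i := by
      rw [hform, hGi]
      rw [hbdef]
      have : ‖V i‖ = T i := rfl
      rw [this]
      nlinarith [hPb, hT2]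
    have h2 : T i ^ 4 * b i ≤ b i := by
      have hT4ge1 : (1:ℝ) ≤ T i ^ 4 := one_le_pow₀ (hT1 i)
      nlinarith [mul_nonneg (sub_nonneg.mpr hT4ge1) (neg_nonneg.mpr hbneg)]
    exact le_trans h1 h2
  exact tendsto_atBot_mono' atTop hΦle hbt
end

section
/- Suppose f : ℝ → ℝ is continuous with f(t)t ≥ −Λt⁴ for some Λ > 0 and f(t)t/t⁴ → +∞ as |t| → ∞. Let uₙ ∈ H¹(ℝ³) with ‖uₙ‖ → ∞ and vₙ = uₙ/‖uₙ‖ → v in L⁴(ℝ³) and a.e., with v ≠ 0 on a set of positive measure. Then ∫_{ℝ³} f(uₙ)uₙ / ‖uₙ‖⁴ dx → +∞. -/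
open MeasureTheory Filter Topology ENNReal

lemma norm_rpow4_eq (a : ℝ) : ‖a‖ ^ ((4:ℝ≥0∞).toReal) = a ^ 4 := by
  rw [ENNReal.toReal_ofNat, Real.norm_eq_abs,
    show ((4:ℝ)) = ((4:ℕ):ℝ) by norm_num, Real.rpow_natCast, pow_abs,
    abs_of_nonneg (by positivity)]

lemma int_pow4 {α} [MeasurableSpace α] {μ : Measure α} {g : α → ℝ}
    (h : MemLp g 4 μ) : Integrable (fun x => g x ^ 4) μ := by
  have h2 := h.integrable_norm_rpow (by norm_num) (by norm_num)
  exact h2.congr (Eventually.of_forall fun x => norm_rpow4_eq (g x))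

lemma int_pow4_le {α} [MeasurableSpace α] {μ : Measure α} {g : α → ℝ}
    (h : MemLp g 4 μ) {K : ℝ≥0∞} (hK : K ≠ ∞) (hle : eLpNorm g 4 μ ≤ K) :
    ∫ x, g x ^ 4 ∂μ ≤ K.toReal ^ 4 := by
  have heq := h.eLpNorm_eq_integral_rpow_norm (by norm_num) (by norm_num)
  rw [heq] at hle
  set I := ∫ a, ‖g a‖ ^ ((4:ℝ≥0∞).toReal) ∂μ with hI
  have hInonneg : 0 ≤ I := integral_nonneg fun x => by
    rw [norm_rpow4_eq]; positivity
  rw [ENNReal.ofReal_le_iff_le_toReal hK] at hle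
  have h2 : (I ^ ((4:ℝ≥0∞).toReal)⁻¹) ^ (4:ℕ) ≤ K.toReal ^ (4:ℕ) :=
    pow_le_pow_left₀ (Real.rpow_nonneg hInonneg _) hle 4
  have h3 : (I ^ ((4:ℝ≥0∞).toReal)⁻¹) ^ (4:ℕ) = I := by
    rw [← Real.rpow_natCast (I ^ ((4:ℝ≥0∞).toReal)⁻¹) 4, ← Real.rpow_mul hInonneg]
    norm_num
  rw [h3] at h2
  calc ∫ x, g x ^ 4 ∂μ = I := integral_congr_ae (Eventually.of_forall fun x =>
        (norm_rpow4_eq (g x)).symm)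
    _ ≤ K.toReal ^ 4 := h2

/-- key step in the (C)* verification: with `f(t)t ≥ -Λt⁴` and
`f(t)t/t⁴ → +∞` as `|t| → ∞`, if `‖uₙ‖ = ρₙ → ∞` and the normalized sequence
`vₙ = uₙ/ρₙ` converges to `v` in `L⁴(ℝ³)` and a.e., with `{v ≠ 0}` of positive measure,
then `∫ f(uₙ)uₙ/ρₙ⁴ → +∞`. -/
theorem stmt_18 (f : ℝ → ℝ) (hf : Continuous f)
    (Λ : ℝ) (hΛ : 0 < Λ) (hlow : ∀ t : ℝ, f t * t ≥ -Λ * t ^ 4)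
    (hsup : Tendsto (fun t => f t * t / t ^ 4) (cocompact ℝ) atTop)
    (u : ℕ → EuclideanSpace ℝ (Fin 3) → ℝ)
    (ρ : ℕ → ℝ) (hρpos : ∀ n, 0 < ρ n)
    (hρ : Tendsto ρ atTop atTop)
    (v : EuclideanSpace ℝ (Fin 3) → ℝ)
    (hmem : ∀ n, MemLp (fun x => u n x / ρ n) 4
      (volume : Measure (EuclideanSpace ℝ (Fin 3))))
    (hmemlim : MemLp v 4 (volume : Measure (EuclideanSpace ℝ (Fin 3))))
    (hL4 : Tendsto (fun n => eLpNorm ((fun x => u n x / ρ n) - v) 4 volume)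
      atTop (𝓝 0))
    (hae : ∀ᵐ x ∂(volume : Measure (EuclideanSpace ℝ (Fin 3))),
      Tendsto (fun n => u n x / ρ n) atTop (𝓝 (v x)))
    (hpos : 0 < volume {x | v x ≠ 0})
    (hint : ∀ n, Integrable (fun x => f (u n x) * u n x)
      (volume : Measure (EuclideanSpace ℝ (Fin 3)))) :
    Tendsto (fun n => ∫ x, f (u n x) * u n x / ρ n ^ 4) atTop atTop := by
  -- measurable representatives
  set w : EuclideanSpace ℝ (Fin 3) → ℝ := hmemlim.aestronglyMeasurable.mk v with hw_def
  have hw_meas : Measurable w := hmemlim.aestronglyMeasurable.stronglyMeasurable_mk.measurable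
  have hvw : v =ᵐ[volume] w := hmemlim.aestronglyMeasurable.ae_eq_mk
  set wn : ℕ → EuclideanSpace ℝ (Fin 3) → ℝ := fun n => (hmem n).aestronglyMeasurable.mk _ with hwn_def
  have hwn_meas : ∀ n, Measurable (wn n) := fun n =>
    (hmem n).aestronglyMeasurable.stronglyMeasurable_mk.measurable
  have hvwn : ∀ n, (fun x => u n x / ρ n) =ᵐ[volume] wn n := fun n =>
    (hmem n).aestronglyMeasurable.ae_eq_mk
  have hwmem : MemLp w 4 (volume : Measure (EuclideanSpace ℝ (Fin 3))) := hmemlim.ae_eq hvw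
  -- {w ≠ 0} has positive measure
  have hposw : 0 < volume {x | w x ≠ 0} := by
    have hnull : volume {x : EuclideanSpace ℝ (Fin 3) | ¬ v x = w x} = 0 := by
      exact ae_iff.mp hvw
    have hsub : {x : EuclideanSpace ℝ (Fin 3) | v x ≠ 0} ⊆ {x | w x ≠ 0} ∪ {x | ¬ v x = w x} := by
      intro x hx
      by_cases h : v x = w x
      · exact Or.inl (by simp only [Set.mem_setOf_eq]; rw [← h]; exact hx)
      · exact Or.inr h
    have hle : volume {x : EuclideanSpace ℝ (Fin 3) | v x ≠ 0} ≤
        volume ({x : EuclideanSpace ℝ (Fin 3) | w x ≠ 0} ∪ {x | ¬ v x = w x}) :=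
      measure_mono hsub
    have hle2 := hle.trans (measure_union_le {x : EuclideanSpace ℝ (Fin 3) | w x ≠ 0} {x | ¬ v x = w x})
    rw [hnull, add_zero] at hle2
    exact lt_of_lt_of_le hpos hle2
  -- find δ > 0 with positive measure superlevel set
  obtain ⟨δ, hδpos, hAδ⟩ : ∃ δ : ℝ, 0 < δ ∧ 0 < volume {x : EuclideanSpace ℝ (Fin 3) | δ ≤ |w x|} := by
    by_contra hcon
    push_neg at hcon
    have hz : ∀ k : ℕ, volume {x : EuclideanSpace ℝ (Fin 3) | (1:ℝ)/(k+1) ≤ |w x|} = 0 := fun k =>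
      le_antisymm (hcon _ (by positivity)) (zero_le)
    have hsub : {x : EuclideanSpace ℝ (Fin 3) | w x ≠ 0} ⊆ ⋃ k : ℕ, {x : EuclideanSpace ℝ (Fin 3) | (1:ℝ)/(k+1) ≤ |w x|} := by
      intro x hx
      obtain ⟨k, hk⟩ := exists_nat_one_div_lt (abs_pos.mpr hx)
      exact Set.mem_iUnion.2 ⟨k, le_of_lt hk⟩
    have hle : volume {x : EuclideanSpace ℝ (Fin 3) | w x ≠ 0} ≤
        volume (⋃ k : ℕ, {x : EuclideanSpace ℝ (Fin 3) | (1:ℝ)/(k+1) ≤ |w x|}) :=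
      measure_mono hsub
    have hle2 := hle.trans (measure_iUnion_le fun k : ℕ =>
      {x : EuclideanSpace ℝ (Fin 3) | (1:ℝ)/(k+1) ≤ |w x|})
    simp only [hz, tsum_zero] at hle2
    exact absurd (le_antisymm hle2 (zero_le)) hposw.ne'
  set A : Set (EuclideanSpace ℝ (Fin 3)) := {x | δ ≤ |w x|} with hA_def
  have hAmeas : MeasurableSet A := measurableSet_le measurable_const hw_meas.abs
  have hAfin : volume A < ∞ := by
    have h := hwmem.meas_ge_lt_top (p := 4) (by norm_num) (by norm_num)
      (ε := δ.toNNReal) (by simp [Real.toNNReal_eq_zero, not_le, hδpos])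
    have : A = {x : EuclideanSpace ℝ (Fin 3) | δ.toNNReal ≤ ‖w x‖₊} := by
      ext x
      simp only [hA_def, Set.mem_setOf_eq, ← NNReal.coe_le_coe, Real.coe_toNNReal _ hδpos.le,
        coe_nnnorm, Real.norm_eq_abs]
    rw [this]
    exact h
  set a : ℝ := (volume A).toReal with ha_def
  have ha : 0 < a := ENNReal.toReal_pos hAδ.ne' hAfin.ne
  -- bound on L⁴ norms
  set K : ℝ≥0∞ := eLpNorm v 4 volume + 1 with hK_def
  have hKne : K ≠ ∞ := by
    simp only [hK_def]
    exact ENNReal.add_ne_top.2 ⟨hmemlim.eLpNorm_lt_top.ne, one_ne_top⟩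
  set C : ℝ := K.toReal ^ 4 with hC_def
  -- convergence in measure on A
  haveI : IsFiniteMeasure (volume.restrict A : Measure (EuclideanSpace ℝ (Fin 3))) :=
    ⟨by rwa [Measure.restrict_apply_univ]⟩
  have haew : ∀ᵐ x ∂(volume : Measure (EuclideanSpace ℝ (Fin 3))), Tendsto (fun n => wn n x) atTop (𝓝 (w x)) := by
    have hall : ∀ᵐ x ∂(volume : Measure (EuclideanSpace ℝ (Fin 3))), ∀ n, u n x / ρ n = wn n x :=
      ae_all_iff.2 fun n => hvwn n
    filter_upwards [hae, hvw, hall] with x hx hvx hallx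
    rw [← hvx]
    exact hx.congr fun n => hallx n
  have htm : TendstoInMeasure (volume.restrict A) wn atTop w :=
    tendstoInMeasure_of_tendsto_ae (fun n => ((hwn_meas n).stronglyMeasurable).aestronglyMeasurable)
      (ae_restrict_of_ae haew)
  -- main goal
  rw [tendsto_atTop]
  intro M
  -- choose m
  set m : ℝ := max 1 ((M + Λ * C) / ((δ/2)^4 * (a/2))) with hm_def
  have hmpos : 0 < m := lt_of_lt_of_le one_pos (le_max_left _ _)
  have hmM : M + Λ * C ≤ m * ((δ/2)^4 * (a/2)) := by
    have hd : 0 < (δ/2)^4 * (a/2) := by positivity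
    have := le_max_right 1 ((M + Λ * C) / ((δ/2)^4 * (a/2)))
    calc M + Λ * C = (M + Λ * C) / ((δ/2)^4 * (a/2)) * ((δ/2)^4 * (a/2)) := by
          field_simp
      _ ≤ m * ((δ/2)^4 * (a/2)) := by
          exact mul_le_mul_of_nonneg_right this hd.le
  -- superlinearity: ∃ R > 0 with f(t)t ≥ m t⁴ for |t| ≥ R
  obtain ⟨R, hRpos, hR⟩ : ∃ R : ℝ, 0 < R ∧ ∀ t : ℝ, R ≤ |t| → m * t ^ 4 ≤ f t * t := by
    have hev : ∀ᶠ t in cocompact ℝ, m ≤ f t * t / t ^ 4 := hsup.eventually_ge_atTop m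
    rw [Filter.hasBasis_cocompact.eventually_iff] at hev
    obtain ⟨s, hs, hsub⟩ := hev
    obtain ⟨r, hr⟩ := hs.isBounded.subset_closedBall 0
    refine ⟨max r 0 + 1, by positivity, fun t ht => ?_⟩
    have ht0 : t ≠ 0 := by
      intro h
      rw [h, abs_zero] at ht
      nlinarith [le_max_right r 0]
    have htnot : t ∉ s := by
      intro hts
      have := hr hts
      rw [Metric.mem_closedBall, Real.dist_eq, sub_zero] at this
      nlinarith [le_max_left r 0]
    have hm4 : m ≤ f t * t / t ^ 4 := hsub htnot
    have ht4 : 0 < t ^ 4 :=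
      lt_of_le_of_ne (by positivity) (Ne.symm (pow_ne_zero 4 ht0))
    exact (le_div_iff₀ ht4).mp hm4
  -- eventual conditions
  have E1 : ∀ᶠ n in atTop, 2 * R / δ ≤ ρ n := hρ.eventually_ge_atTop _
  have E2 : ∀ᶠ n in atTop,
      (volume.restrict A) {x | δ/2 ≤ dist (wn n x) (w x)} < volume A / 2 := by
    refine ((htm (ENNReal.ofReal (δ/2)) (ENNReal.ofReal_pos.2 (by positivity))).eventually_lt_const (u := volume A / 2) ?_).mono fun n (hn : (volume.restrict A) {x | ENNReal.ofReal (δ/2) ≤ edist (wn n x) (w x)} < volume A / 2) => ?_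
    · exact ENNReal.div_pos hAδ.ne' (by norm_num)
    · have hseteq : {x | δ/2 ≤ dist (wn n x) (w x)} = {x | ENNReal.ofReal (δ/2) ≤ edist (wn n x) (w x)} := by
        ext x; simp only [Set.mem_setOf_eq, edist_dist]
        exact (ENNReal.ofReal_le_ofReal_iff dist_nonneg).symm
      rwa [hseteq]
  have E3 : ∀ᶠ n in atTop, eLpNorm ((fun x => u n x / ρ n) - v) 4 volume ≤ 1 :=
    (hL4.eventually_lt_const one_pos).mono fun n h => h.le
  filter_upwards [E1, E2, E3] with n h1 h2 h3
  -- notation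
  set vn : EuclideanSpace ℝ (Fin 3) → ℝ := fun x => u n x / ρ n with hvn_def
  have hρn : 0 < ρ n := hρpos n
  -- integrability
  have hvn4_int : Integrable (fun x => vn x ^ 4) (volume : Measure (EuclideanSpace ℝ (Fin 3))) := int_pow4 (hmem n)
  have hg_int : Integrable (fun x => f (u n x) * u n x / ρ n ^ 4) (volume : Measure (EuclideanSpace ℝ (Fin 3))) :=
    (hint n).div_const _
  set h : EuclideanSpace ℝ (Fin 3) → ℝ := fun x => f (u n x) * u n x / ρ n ^ 4 + Λ * vn x ^ 4 with hh_def
  have hh_int : Integrable h (volume : Measure (EuclideanSpace ℝ (Fin 3))) := hg_int.add (hvn4_int.const_mul Λ)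
  have hh0 : ∀ x, 0 ≤ h x := by
    intro x
    have h1 : vn x ^ 4 = u n x ^ 4 / ρ n ^ 4 := div_pow _ _ 4
    have h2 : 0 ≤ f (u n x) * u n x + Λ * u n x ^ 4 := by
      have := hlow (u n x); nlinarith
    have hρ4 : 0 < ρ n ^ 4 := by positivity
    rw [hh_def]
    simp only
    rw [h1]
    have h3 : f (u n x) * u n x / ρ n ^ 4 + Λ * (u n x ^ 4 / ρ n ^ 4)
        = (f (u n x) * u n x + Λ * u n x ^ 4) / ρ n ^ 4 := by ring
    rw [h3]
    exact div_nonneg h2 hρ4.le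
  -- L⁴ bound
  have hvnC : ∫ x, vn x ^ 4 ≤ C := by
    refine int_pow4_le (hmem n) hKne ?_
    have : eLpNorm vn 4 volume ≤ eLpNorm (vn - v) 4 volume + eLpNorm v 4 volume := by
      have := eLpNorm_add_le ((hmem n).aestronglyMeasurable.sub hmemlim.aestronglyMeasurable)
        hmemlim.aestronglyMeasurable (by norm_num : (1:ℝ≥0∞) ≤ 4)
      simpa [sub_add_cancel] using this
    calc eLpNorm vn 4 volume ≤ eLpNorm (vn - v) 4 volume + eLpNorm v 4 volume := this
      _ ≤ 1 + eLpNorm v 4 volume := add_le_add_left h3 _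
      _ = K := by rw [hK_def, add_comm]
  -- good set
  set bad : Set (EuclideanSpace ℝ (Fin 3)) := {x | δ/2 ≤ dist (wn n x) (w x)} with hbad_def
  have hbadmeas : MeasurableSet bad :=
    measurableSet_le measurable_const ((hwn_meas n).dist hw_meas)
  set S : Set (EuclideanSpace ℝ (Fin 3)) := A \ bad with hS_def
  have hSmeas : MeasurableSet S := hAmeas.diff hbadmeas
  have hSfin : volume S < ∞ := lt_of_le_of_lt (measure_mono Set.diff_subset) hAfin
  have hShalf : volume A / 2 ≤ volume S := by
    have hsplit : volume A ≤ volume S + volume (A ∩ bad) := by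
      refine (measure_mono ?_).trans (measure_union_le _ _)
      intro x hx
      by_cases hb : x ∈ bad
      · exact Or.inr ⟨hx, hb⟩
      · exact Or.inl ⟨hx, hb⟩
    have hrest : volume (A ∩ bad) < volume A / 2 := by
      rwa [Measure.restrict_apply hbadmeas, Set.inter_comm] at h2
    by_contra hcon
    push_neg at hcon
    have : volume A < volume A / 2 + volume A / 2 :=
      lt_of_le_of_lt hsplit (ENNReal.add_lt_add hcon hrest)
    rw [ENNReal.add_halves] at this
    exact absurd this (lt_irrefl _)
  have hSreal : a / 2 ≤ (volume S).toReal := by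
    have h1 : (volume A / 2).toReal = a / 2 := by
      rw [ENNReal.toReal_div, ha_def]
      norm_num
    rw [← h1]
    exact ENNReal.toReal_le_toReal ((ENNReal.div_lt_top hAfin.ne (by norm_num)).ne) hSfin.ne
      |>.mpr hShalf
  -- pointwise lower bound on S
  set c : ℝ := m * (δ/2)^4 with hc_def
  have hcpos : 0 < c := by positivity
  have hptwise : ∀ᵐ x ∂(volume.restrict S), c ≤ h x := by
    have hmemS : ∀ᵐ x ∂(volume.restrict S), x ∈ S := ae_restrict_mem hSmeas
    filter_upwards [hmemS, ae_restrict_of_ae (hvw : v =ᵐ[volume] w),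
      ae_restrict_of_ae (hvwn n)] with x hxS hxv hxvn
    obtain ⟨hxA, hxbad⟩ := hxS
    have hwx : δ ≤ |w x| := hxA
    have hdist : dist (wn n x) (w x) < δ/2 := lt_of_not_ge hxbad
    have hvnx : δ/2 ≤ |vn x| := by
      have : |vn x - w x| < δ/2 := by
        rw [show vn x = wn n x from hxvn]
        rw [Real.dist_eq] at hdist
        exact hdist
      have := abs_sub_abs_le_abs_sub (w x) (vn x)
      rw [abs_sub_comm] at this
      linarith
    have hux : R ≤ |u n x| := by
      have hux_eq : u n x = vn x * ρ n := by
        rw [hvn_def]; field_simp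
      rw [hux_eq, abs_mul, abs_of_pos hρn]
      have h2Rδ : R ≤ δ/2 * ρ n := by
        rw [div_mul_eq_mul_div, le_div_iff₀ (by norm_num : (0:ℝ) < 2)] at *
        calc R * 2 = 2 * R := by ring
          _ = 2 * R / δ * δ := by field_simp
          _ ≤ ρ n * δ := mul_le_mul_of_nonneg_right h1 hδpos.le
          _ = δ * ρ n := by ring
      calc R ≤ δ/2 * ρ n := h2Rδ
        _ ≤ |vn x| * ρ n := mul_le_mul_of_nonneg_right hvnx hρn.le
    have hfu : m * u n x ^ 4 ≤ f (u n x) * u n x := hR _ hux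
    have hvn4 : (δ/2)^4 ≤ vn x ^ 4 := by
      calc (δ/2)^4 ≤ |vn x| ^ 4 := by
            exact pow_le_pow_left₀ (by positivity) hvnx 4
        _ = vn x ^ 4 := by rw [pow_abs, abs_of_nonneg (by positivity)]
    have hkey : m * vn x ^ 4 ≤ f (u n x) * u n x / ρ n ^ 4 := by
      have hvn4eq : vn x ^ 4 = u n x ^ 4 / ρ n ^ 4 := div_pow _ _ 4
      rw [hvn4eq, le_div_iff₀ (by positivity : (0:ℝ) < ρ n ^ 4)]
      calc m * (u n x ^ 4 / ρ n ^ 4) * ρ n ^ 4 = m * u n x ^ 4 := by field_simp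
        _ ≤ f (u n x) * u n x := hfu
    have hΛterm : 0 ≤ Λ * vn x ^ 4 := by positivity
    calc c = m * (δ/2)^4 := hc_def
      _ ≤ m * vn x ^ 4 := mul_le_mul_of_nonneg_left hvn4 hmpos.le
      _ ≤ f (u n x) * u n x / ρ n ^ 4 := hkey
      _ ≤ h x := by rw [hh_def]; simp only; linarith
  -- integral bounds
  have hint_S : c * (volume S).toReal ≤ ∫ x in S, h x := by
    have hconst : IntegrableOn (fun _ : EuclideanSpace ℝ (Fin 3) => c) S volume :=
      integrableOn_const hSfin.ne
    have := setIntegral_mono_ae_restrict hconst hh_int.integrableOn hptwise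
    rwa [setIntegral_const, smul_eq_mul, mul_comm] at this
  have hS_le : ∫ x in S, h x ≤ ∫ x, h x :=
    setIntegral_le_integral hh_int (Eventually.of_forall hh0)
  have hsplit_int : ∫ x, f (u n x) * u n x / ρ n ^ 4 = (∫ x, h x) - Λ * ∫ x, vn x ^ 4 := by
    rw [hh_def]
    rw [integral_add hg_int (hvn4_int.const_mul Λ), integral_const_mul]
    ring
  rw [hsplit_int]
  have hc1 : c * (a/2) ≤ c * (volume S).toReal := mul_le_mul_of_nonneg_left hSreal hcpos.le
  have hΛC : Λ * ∫ x, vn x ^ 4 ≤ Λ * C := mul_le_mul_of_nonneg_left hvnC hΛ.le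
  have : m * ((δ/2)^4 * (a/2)) = c * (a/2) := by rw [hc_def]; ring
  nlinarith [hint_S, hS_le]
end
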